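/- Let 0 < a < b < ∞, let H : [a,b] → ℝ be non-decreasing, bounded and non-negative, and let G₁, G₂ : [a,b] → ℝ be continuous functions of bounded variation with G₁(b) = G₂(b) = 0. If G₁(x) ≤ G₂(x) for all x ∈ [a,b], then ∫_a^b H(x) d[−G₁(x)] ≤ ∫_a^b H(x) d[−G₂(x)], where the integrals are Riemann–Stieltjes integrals with respect to −G₁ and −G₂. -/

import Mathlib

open Set Filter

noncomputable section

/-- The Riemann–Stieltjes sum of `f` with respect to `g` for the tagged partition
given by points `t 0, t 1, ..., t n` with tags `ξ 0, ..., ξ (n-1)`. -/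
def rsSum (f g : ℝ → ℝ) (n : ℕ) (t ξ : ℕ → ℝ) : ℝ :=
  ∑ i ∈ Finset.range n, f (ξ i) * (g (t (i + 1)) - g (t i))

/-- `IsRSIntegral f g a b I` says that the Riemann–Stieltjes integral
`∫_a^b f(x) dg(x)` exists and equals `I`: for every `ε > 0` there is `δ > 0` such
that every tagged partition of `[a, b]` of mesh `< δ` has Riemann–Stieltjes sum
within `ε` of `I`. -/
def IsRSIntegral (f g : ℝ → ℝ) (a b I : ℝ) : Prop :=
  ∀ ε > 0, ∃ δ > 0, ∀ (n : ℕ) (t ξ : ℕ → ℝ),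
    t 0 = a → t n = b →
    (∀ i < n, t i ≤ t (i + 1)) →
    (∀ i < n, ξ i ∈ Set.Icc (t i) (t (i + 1))) →
    (∀ i < n, t (i + 1) - t i < δ) →
    |rsSum f g n t ξ - I| < ε

/-- `IsImproperRSIntegral f g a I` says that the improper Riemann–Stieltjes integral
`∫_a^∞ f(x) dg(x) = lim_{b→∞} ∫_a^b f(x) dg(x)` exists and equals `I`. -/
def IsImproperRSIntegral (f g : ℝ → ℝ) (a I : ℝ) : Prop :=
  ∃ F : ℝ → ℝ, (∀ b, a < b → IsRSIntegral f g a b (F b)) ∧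
    Filter.Tendsto F Filter.atTop (nhds I)

/-- Abel-summation nonnegativity: if `h` is nondecreasing with `h 0 ≥ 0` and `f ≥ 0`,
then `∑_{i<n} h i (f i - f (i+1)) + h (n-1) * f n ≥ 0`. -/
lemma abel_aux (h f : ℕ → ℝ) (hh0 : 0 ≤ h 0) :
    ∀ n, 1 ≤ n → (∀ i, i + 1 < n → h i ≤ h (i + 1)) → (∀ i ≤ n, 0 ≤ f i) →
    0 ≤ (∑ i ∈ Finset.range n, h i * (f i - f (i + 1))) + h (n - 1) * f n := by
  intro n hn
  induction n, hn using Nat.le_induction with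
  | base =>
    intro _ hf
    simp only [Finset.sum_range_one]
    nlinarith [hf 0 (by norm_num), hf 1 (le_refl 1)]
  | succ n hn ih =>
    intro hmono hf
    have ih' := ih (fun i hi => hmono i (by omega)) (fun i hi => hf i (by omega))
    rw [Finset.sum_range_succ]
    have hnn : n + 1 - 1 = n := by omega
    rw [hnn]
    have hmn : h (n - 1) ≤ h n := by
      have := hmono (n - 1) (by omega)
      have : n - 1 + 1 = n := by omega
      have h2 := hmono (n - 1) (by omega)
      rwa [this] at h2
    have hfn : 0 ≤ f n := hf n (by omega)
    nlinarith

/-- If `0 < a < b < ∞`, `H` is non-decreasing, bounded and non-negative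
on `[a,b]`, `G₁, G₂` are continuous, of bounded variation on `[a,b]` with
`G₁ b = G₂ b = 0` and `G₁ ≤ G₂` on `[a,b]`, then
`∫_a^b H(x) d[-G₁(x)] ≤ ∫_a^b H(x) d[-G₂(x)]`. -/
theorem rs_monotone_nondecreasing
    (a b : ℝ) (ha : 0 < a) (hab : a < b)
    (H G₁ G₂ : ℝ → ℝ) (I₁ I₂ : ℝ)
    (hH_mono : MonotoneOn H (Set.Icc a b))
    (hH_bdd : ∃ M, ∀ x ∈ Set.Icc a b, |H x| ≤ M)
    (hH_nonneg : ∀ x ∈ Set.Icc a b, 0 ≤ H x)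
    (hG₁_cont : ContinuousOn G₁ (Set.Icc a b))
    (hG₁_bv : BoundedVariationOn G₁ (Set.Icc a b))
    (hG₂_cont : ContinuousOn G₂ (Set.Icc a b))
    (hG₂_bv : BoundedVariationOn G₂ (Set.Icc a b))
    (hG₁_b : G₁ b = 0) (hG₂_b : G₂ b = 0)
    (hle : ∀ x ∈ Set.Icc a b, G₁ x ≤ G₂ x)
    (hI₁ : IsRSIntegral H (fun x => -G₁ x) a b I₁)
    (hI₂ : IsRSIntegral H (fun x => -G₂ x) a b I₂) :
    I₁ ≤ I₂ := by
  refine le_of_forall_pos_le_add ?_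
  intro ε hε
  obtain ⟨δ₁, hδ₁, h1⟩ := hI₁ (ε/2) (by positivity)
  obtain ⟨δ₂, hδ₂, h2⟩ := hI₂ (ε/2) (by positivity)
  set δ := min δ₁ δ₂ with hδdef
  have hδpos : 0 < δ := lt_min hδ₁ hδ₂
  obtain ⟨n, hn⟩ := exists_nat_gt ((b - a) / δ)
  have hban : (0:ℝ) < (b - a) / δ := div_pos (by linarith) hδpos
  have hnpos : (0:ℝ) < n := lt_trans hban hn
  have hn0 : n ≠ 0 := by
    rintro rfl; simp at hnpos
  set c := (b - a) / n with hcdef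
  have hcpos : 0 < c := div_pos (by linarith) hnpos
  have hcδ : c < δ := by
    rw [hcdef, div_lt_iff₀ hnpos]
    calc b - a = ((b - a) / δ) * δ := by field_simp
    _ < n * δ := mul_lt_mul_of_pos_right hn hδpos
    _ = δ * n := by ring
  set t : ℕ → ℝ := fun i => a + i * c with htdef
  have ht0 : t 0 = a := by simp [htdef]
  have htn : t n = b := by
    simp only [htdef, hcdef]
    field_simp
    ring
  have htmono : ∀ i < n, t i ≤ t (i + 1) := by
    intro i _
    simp only [htdef, Nat.cast_add, Nat.cast_one]
    nlinarith
  have htag : ∀ i < n, t i ∈ Set.Icc (t i) (t (i + 1)) := by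
    intro i hi
    exact ⟨le_refl _, htmono i hi⟩
  have hmesh₁ : ∀ i < n, t (i + 1) - t i < δ₁ := by
    intro i _
    have : t (i + 1) - t i = c := by
      simp only [htdef, Nat.cast_add, Nat.cast_one]; ring
    rw [this]
    exact lt_of_lt_of_le hcδ (min_le_left _ _)
  have hmesh₂ : ∀ i < n, t (i + 1) - t i < δ₂ := by
    intro i _
    have : t (i + 1) - t i = c := by
      simp only [htdef, Nat.cast_add, Nat.cast_one]; ring
    rw [this]
    exact lt_of_lt_of_le hcδ (min_le_right _ _)
  have hmem : ∀ i ≤ n, t i ∈ Set.Icc a b := by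
    intro i hi
    constructor
    · simp only [htdef]; nlinarith [Nat.cast_nonneg (α := ℝ) i]
    · simp only [htdef]
      have hin : (i : ℝ) ≤ n := by exact_mod_cast hi
      have : (i : ℝ) * c ≤ n * c := by nlinarith
      have hnc : (n : ℝ) * c = b - a := by
        rw [hcdef]; field_simp
      linarith
  have hS1 := h1 n t t ht0 htn htmono htag hmesh₁
  have hS2 := h2 n t t ht0 htn htmono htag hmesh₂
  -- key comparison
  have hnge1 : 1 ≤ n := Nat.one_le_iff_ne_zero.mpr hn0
  have key := abel_aux (fun i => H (t i)) (fun i => G₂ (t i) - G₁ (t i))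
    (hH_nonneg _ (by rw [ht0]; exact ⟨le_refl a, le_of_lt hab⟩)) n hnge1
    (fun i hi => hH_mono (hmem i (by omega)) (hmem (i+1) (by omega)) (htmono i (by omega)))
    (fun i hi => by have := hle (t i) (hmem i hi); linarith)
  beta_reduce at key
  have hfn : G₂ (t n) - G₁ (t n) = 0 := by rw [htn, hG₁_b, hG₂_b]; ring
  rw [hfn, mul_zero, add_zero] at key
  have hdiff : rsSum H (fun x => -G₂ x) n t t - rsSum H (fun x => -G₁ x) n t t
      = ∑ i ∈ Finset.range n, H (t i) * ((G₂ (t i) - G₁ (t i)) - (G₂ (t (i+1)) - G₁ (t (i+1)))) := by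
    simp only [rsSum, ← Finset.sum_sub_distrib]
    apply Finset.sum_congr rfl
    intro i _
    ring
  have hcmp : rsSum H (fun x => -G₁ x) n t t ≤ rsSum H (fun x => -G₂ x) n t t := by
    have : 0 ≤ rsSum H (fun x => -G₂ x) n t t - rsSum H (fun x => -G₁ x) n t t := by
      rw [hdiff]; exact key
    linarith
  have e1 := abs_lt.mp hS1
  have e2 := abs_lt.mp hS2
  linarith [e1.1, e1.2, e2.1, e2.2]
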